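/- Under the hypotheses of the SSP integrating factor two-step Runge–Kutta theorem — v_{i,1}, v_{i,2}, α̂_i, α_{i,j} ≥ 0 with v_{i,1} + v_{i,2} + α̂_i + Σ_{j=1}^{i−1} α_{i,j} = 1 for i = 2, …, s+1, r > 0, non-decreasing abscissas 0 = c_1 ≤ c_2 ≤ ⋯ ≤ c_s ≤ c_{s+1} = 1, L satisfying the exponential monotonicity condition, N satisfying the forward-Euler condition with step bound h_FE > 0, and 0 ≤ Δt ≤ r h_FE — every stage of the method y_1 = u^n, y_i = v_{i,1} • exp((c_i + 1) Δt • L) u^{n−1} + v_{i,2} • u^n + α̂_i • exp((c_i + 1) Δt • L)(u^{n−1} + (Δt/r) • N(u^{n−1})) + Σ_{j=1}^{i−1} α_{i,j} • exp((c_i − c_j) Δt • L)(y_j + (Δt/r) • N(y_j)) satisfies f(y_i) ≤ max{ f(u^{n−1}), f(u^n) } for every i = 1, …, s+1. -/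

import Mathlib

private lemma convex_sum_le_bound {E : Type*} [NormedAddCommGroup E] [NormedSpace ℝ E]
    (f : E → ℝ) (hf : ConvexOn ℝ Set.univ f) (t : Finset ℕ) (w : ℕ → ℝ) (p : ℕ → E)
    (M : ℝ) (h0 : ∀ j ∈ t, 0 ≤ w j) (h1 : ∑ j ∈ t, w j = 1)
    (hp : ∀ j ∈ t, f (p j) ≤ M) :
    f (∑ j ∈ t, w j • p j) ≤ M := by
  calc f (∑ j ∈ t, w j • p j) ≤ ∑ j ∈ t, w j • f (p j) :=
        hf.map_sum_le h0 h1 (fun _ _ => Set.mem_univ _)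
    _ ≤ ∑ j ∈ t, w j • M := Finset.sum_le_sum fun j hj =>
        smul_le_smul_of_nonneg_left (hp j hj) (h0 j hj)
    _ = M := by rw [← Finset.sum_smul, h1, one_smul]



/-- **SSP integrating factor two-step Runge–Kutta methods with non-decreasing
abscissas.**  If the explicit two-step Runge–Kutta method (coefficients
`v₁ i, v₂ i, α̂ i, α i j ≥ 0` summing to one on each row, SSP coefficient `r > 0`)
has non-decreasing abscissas `0 = c 1 ≤ c 2 ≤ ⋯ ≤ c s ≤ c (s+1) = 1`,
`L` satisfies the exponential monotonicity condition, `N` satisfies the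
forward-Euler condition with step bound `hFE > 0`, and `0 ≤ Δt ≤ r * hFE`,
then every stage of the integrating factor two-step Runge–Kutta method satisfies
`f (y i) ≤ max (f uⁿ⁻¹) (f uⁿ)` at every stage `i = 1, …, s+1`. -/
theorem ssp_integratingFactor_twoStepRungeKutta_stages
    {E : Type*} [NormedAddCommGroup E] [NormedSpace ℝ E] [FiniteDimensional ℝ E]
    (f : E → ℝ) (hf_cont : Continuous f) (hf_conv : ConvexOn ℝ Set.univ f)
    (L : E →L[ℝ] E) (N : E → E)
    (hFE : ℝ) (hFE_pos : 0 < hFE)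
    (hL : ∀ (τ : ℝ), 0 ≤ τ → ∀ u : E, f (NormedSpace.exp (τ • L) u) ≤ f u)
    (hN : ∀ u : E, ∀ τ : ℝ, 0 ≤ τ → τ ≤ hFE → f (u + τ • N u) ≤ f u)
    (s : ℕ) (hs : 1 ≤ s) (r : ℝ) (hr : 0 < r)
    (v1 v2 αhat : ℕ → ℝ) (α : ℕ → ℕ → ℝ)
    (hv1 : ∀ i, 2 ≤ i → i ≤ s + 1 → 0 ≤ v1 i)
    (hv2 : ∀ i, 2 ≤ i → i ≤ s + 1 → 0 ≤ v2 i)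
    (hαhat : ∀ i, 2 ≤ i → i ≤ s + 1 → 0 ≤ αhat i)
    (hα : ∀ i j, 2 ≤ i → i ≤ s + 1 → 1 ≤ j → j < i → 0 ≤ α i j)
    (hconsistency : ∀ i, 2 ≤ i → i ≤ s + 1 →
      v1 i + v2 i + αhat i + ∑ j ∈ Finset.Icc 1 (i - 1), α i j = 1)
    (c : ℕ → ℝ) (hc1 : c 1 = 0) (hcs1 : c (s + 1) = 1)
    (hc_mono : ∀ j, 1 ≤ j → j ≤ s → c j ≤ c (j + 1))
    (uprev un : E) (Δt : ℝ) (hΔt_nonneg : 0 ≤ Δt) (hΔt : Δt ≤ r * hFE)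
    (y : ℕ → E) (hy1 : y 1 = un)
    (hy : ∀ i, 2 ≤ i → i ≤ s + 1 →
      y i = v1 i • NormedSpace.exp (((c i + 1) * Δt) • L) uprev
          + v2 i • un
          + αhat i • NormedSpace.exp (((c i + 1) * Δt) • L)
              (uprev + (Δt / r) • N uprev)
          + ∑ j ∈ Finset.Icc 1 (i - 1), α i j •
              NormedSpace.exp (((c i - c j) * Δt) • L)
                (y j + (Δt / r) • N (y j))) :
    ∀ i, 1 ≤ i → i ≤ s + 1 → f (y i) ≤ max (f uprev) (f un) := by
  have cmono : ∀ b, b ≤ s + 1 → ∀ a, 1 ≤ a → a ≤ b → c a ≤ c b := by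
    intro b
    induction b with
    | zero => intro _ a ha hab; omega
    | succ n ih =>
      intro hb a ha hab
      rcases eq_or_lt_of_le hab with h | h
      · exact le_of_eq (by rw [h])
      · have h1 : a ≤ n := by omega
        have h2 : c a ≤ c n := ih (by omega) a ha h1
        have h3 : c n ≤ c (n + 1) := hc_mono n (by omega) (by omega)
        linarith
  have hτr : 0 ≤ Δt / r := div_nonneg hΔt_nonneg hr.le
  have hτr' : Δt / r ≤ hFE := by
    rw [div_le_iff₀ hr]; linarith
  intro i
  induction i using Nat.strong_induction_on with
  | _ i ih =>
    intro hi1 hi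
    rcases Nat.lt_or_ge i 2 with h2 | h2
    · have hieq : i = 1 := by omega
      rw [hieq, hy1]; exact le_max_right _ _
    · set w : ℕ → ℝ := fun j => if j ≤ i - 1 then α i j else if j = i then v1 i
        else if j = i + 1 then v2 i else αhat i with hw
      set p : ℕ → E := fun j => if j ≤ i - 1 then
          NormedSpace.exp (((c i - c j) * Δt) • L) (y j + (Δt / r) • N (y j))
        else if j = i then NormedSpace.exp (((c i + 1) * Δt) • L) uprev
        else if j = i + 1 then un
        else NormedSpace.exp (((c i + 1) * Δt) • L) (uprev + (Δt / r) • N uprev) with hp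
      have hni : ¬ (i ≤ i - 1) := by omega
      have hni1 : ¬ (i + 1 ≤ i - 1) := by omega
      have hni2 : ¬ (i + 2 ≤ i - 1) := by omega
      have hne1 : ¬ (i + 1 = i) := by omega
      have hne2 : ¬ (i + 2 = i) := by omega
      have hne3 : ¬ (i + 2 = i + 1) := by omega
      have hsplit : Finset.Icc 1 (i + 2) = Finset.Icc 1 (i - 1) ∪ {i, i + 1, i + 2} := by
        ext x
        simp only [Finset.mem_Icc, Finset.mem_union, Finset.mem_insert, Finset.mem_singleton]
        omega
      have hdisj : Disjoint (Finset.Icc 1 (i - 1)) ({i, i + 1, i + 2} : Finset ℕ) := by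
        rw [Finset.disjoint_left]
        intro x hx hx'
        simp only [Finset.mem_Icc] at hx
        simp only [Finset.mem_insert, Finset.mem_singleton] at hx'
        omega
      have hsum3 : ∀ g : ℕ → ℝ, ∑ j ∈ ({i, i + 1, i + 2} : Finset ℕ), g j
          = g i + g (i + 1) + g (i + 2) := by
        intro g
        rw [Finset.sum_insert (by simp), Finset.sum_insert (by simp), Finset.sum_singleton]
        ring
      have hsum3E : ∀ g : ℕ → E, ∑ j ∈ ({i, i + 1, i + 2} : Finset ℕ), g j
          = g i + g (i + 1) + g (i + 2) := by
        intro g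
        rw [Finset.sum_insert (by simp), Finset.sum_insert (by simp), Finset.sum_singleton]
        abel
      have wieq : w i = v1 i := by simp only [hw]; rw [if_neg hni]; simp
      have wi1eq : w (i + 1) = v2 i := by
        simp only [hw]; rw [if_neg hni1, if_neg hne1]; simp
      have wi2eq : w (i + 2) = αhat i := by
        simp only [hw]; rw [if_neg hni2, if_neg hne2, if_neg hne3]
      have pieq : p i = NormedSpace.exp (((c i + 1) * Δt) • L) uprev := by
        simp only [hp]; rw [if_neg hni]; simp
      have pi1eq : p (i + 1) = un := by
        simp only [hp]; rw [if_neg hni1, if_neg hne1]; simp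
      have pi2eq : p (i + 2)
          = NormedSpace.exp (((c i + 1) * Δt) • L) (uprev + (Δt / r) • N uprev) := by
        simp only [hp]; rw [if_neg hni2, if_neg hne2, if_neg hne3]
      have hyi : y i = ∑ j ∈ Finset.Icc 1 (i + 2), w j • p j := by
        rw [hsplit, Finset.sum_union hdisj, hsum3E]
        have hrest : ∑ j ∈ Finset.Icc 1 (i - 1), w j • p j
            = ∑ j ∈ Finset.Icc 1 (i - 1), α i j •
              NormedSpace.exp (((c i - c j) * Δt) • L) (y j + (Δt / r) • N (y j)) := by
          refine Finset.sum_congr rfl fun j hj => ?_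
          have hj' : j ≤ i - 1 := (Finset.mem_Icc.mp hj).2
          simp only [hw, hp, if_pos hj']
        rw [hrest, hy i h2 hi, wieq, wi1eq, wi2eq, pieq, pi1eq, pi2eq]
        abel
      rw [hyi]
      refine convex_sum_le_bound f hf_conv _ w p _ ?_ ?_ ?_
      · intro j hj
        rw [Finset.mem_Icc] at hj
        by_cases hj' : j ≤ i - 1
        · simp only [hw, if_pos hj']
          exact hα i j h2 hi hj.1 (by omega)
        · simp only [hw, if_neg hj']
          by_cases hij : j = i
          · simp only [if_pos hij]; exact hv1 i h2 hi
          · simp only [if_neg hij]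
            by_cases hij1 : j = i + 1
            · simp only [if_pos hij1]; exact hv2 i h2 hi
            · simp only [if_neg hij1]; exact hαhat i h2 hi
      · rw [hsplit, Finset.sum_union hdisj, hsum3]
        have hrest : ∑ j ∈ Finset.Icc 1 (i - 1), w j = ∑ j ∈ Finset.Icc 1 (i - 1), α i j := by
          refine Finset.sum_congr rfl fun j hj => ?_
          simp only [hw, if_pos (Finset.mem_Icc.mp hj).2]
        rw [hrest, wieq, wi1eq, wi2eq]
        have := hconsistency i h2 hi
        linarith
      · intro j hj
        rw [Finset.mem_Icc] at hj
        have hc_nonneg : 0 ≤ c i := by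
          have := cmono i hi 1 le_rfl hi1
          linarith [hc1 ▸ this]
        by_cases hj' : j ≤ i - 1
        · simp only [hp, if_pos hj']
          have h1j : 1 ≤ j := hj.1
          have hji : j < i := by omega
          have hcji : c j ≤ c i := cmono i hi j h1j (by omega)
          have hτ : 0 ≤ (c i - c j) * Δt := mul_nonneg (by linarith) hΔt_nonneg
          calc f (NormedSpace.exp (((c i - c j) * Δt) • L) (y j + (Δt / r) • N (y j)))
              ≤ f (y j + (Δt / r) • N (y j)) := hL _ hτ _
            _ ≤ f (y j) := hN _ _ hτr hτr'
            _ ≤ max (f uprev) (f un) := ih j hji h1j (by omega)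
        · simp only [hp, if_neg hj']
          have hτ : 0 ≤ (c i + 1) * Δt := mul_nonneg (by linarith) hΔt_nonneg
          by_cases hij : j = i
          · simp only [if_pos hij]
            exact le_trans (hL _ hτ _) (le_max_left _ _)
          · simp only [if_neg hij]
            by_cases hij1 : j = i + 1
            · simp only [if_pos hij1]; exact le_max_right _ _
            · simp only [if_neg hij1]
              calc f (NormedSpace.exp (((c i + 1) * Δt) • L) (uprev + (Δt / r) • N uprev))
                  ≤ f (uprev + (Δt / r) • N uprev) := hL _ hτ _
                _ ≤ f uprev := hN _ _ hτr hτr'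
                _ ≤ max (f uprev) (f un) := le_max_left _ _
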